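/- Let F_m be the free group on m ≥ 2 generators with standard symmetric generating set S, let w be a normalized symmetric weight (Σ_{s∈S} w(s) = 1), and let h(w) denote the volume entropy. Then e^{h(w)} ≥ 2m − 1, i.e., the entropy of any normalized weight on F_m is at least ln(2m−1). -/

import Mathlib

variable {G : Type*} [Group G]

/-- The weighted word metric: `dW S w x y` is the infimum of total `w`-weights of words
over `S` representing `y⁻¹ * x`. -/
noncomputable def dW (S : Set G) (w : G → ℝ) (x y : G) : ℝ :=
  sInf {c : ℝ | ∃ l : List G, (∀ s ∈ l, s ∈ S) ∧ l.prod = y⁻¹ * x ∧ c = (l.map w).sum}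

/-- The closed ball of radius `R` about the identity in the weighted word metric. -/
noncomputable def ballW (S : Set G) (w : G → ℝ) (R : ℝ) : Set G :=
  {x : G | dW S w x 1 ≤ R}

/-- The standard symmetric generating set of the free group. -/
def stdGens (m : ℕ) : Set (FreeGroup (Fin m)) :=
  {x | ∃ i : Fin m, x = FreeGroup.of i ∨ x = (FreeGroup.of i)⁻¹}

-- A: reduce of all-true word is itself
lemma reduce_map_true {α : Type*} [DecidableEq α] (l : List α) :
    FreeGroup.reduce (l.map (fun i => (i, true))) = l.map (fun i => (i, true)) := by
  induction l with
  | nil => simp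
  | cons a l ih =>
    simp only [List.map_cons, FreeGroup.reduce.cons, ih]
    cases l with
    | nil => simp
    | cons b l => simp

-- B: positive words give mk
lemma prod_map_of {α : Type*} (l : List α) :
    (l.map FreeGroup.of).prod = FreeGroup.mk (l.map (fun i => (i, true))) := by
  induction l with
  | nil => rfl
  | cons a l ih =>
    simp only [List.map_cons, List.prod_cons, ih, FreeGroup.of, FreeGroup.mul_mk]
    rfl

lemma prodOf_injective {α : Type*} [DecidableEq α] :
    Function.Injective (fun l : List α => (l.map FreeGroup.of).prod) := by
  intro l1 l2 hl
  simp only [prod_map_of] at hl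
  have := congrArg FreeGroup.toWord hl
  simp only [FreeGroup.toWord_mk, reduce_map_true] at this
  exact List.map_injective_iff.2 (fun a b hab => (Prod.mk.injEq _ _ _ _ ▸ hab).1) this

-- C: mk as a product over generators
lemma mk_eq_prod {α : Type*} (L : List (α × Bool)) :
    FreeGroup.mk L = (L.map (fun p => cond p.2 (FreeGroup.of p.1) (FreeGroup.of p.1)⁻¹)).prod := by
  induction L with
  | nil => rfl
  | cons p L ih =>
    have : FreeGroup.mk (p :: L) = FreeGroup.mk [p] * FreeGroup.mk L := by
      rw [FreeGroup.mul_mk]; rfl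
    rw [this, ih, List.map_cons, List.prod_cons]
    congr 1
    rcases p with ⟨a, b⟩
    cases b
    · show FreeGroup.mk [(a, false)] = (FreeGroup.of a)⁻¹
      rw [FreeGroup.of, FreeGroup.inv_mk]; rfl
    · rfl

lemma stdGens_finite (m : ℕ) : (stdGens m).Finite := by
  have : stdGens m ⊆ (Set.range (fun i : Fin m => FreeGroup.of i)) ∪
      (Set.range (fun i : Fin m => (FreeGroup.of i)⁻¹)) := by
    rintro x ⟨i, hi | hi⟩
    · exact Or.inl ⟨i, hi.symm⟩
    · exact Or.inr ⟨i, hi.symm⟩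
  exact ((Set.finite_range _).union (Set.finite_range _)).subset this

section
variable (S : Set G) (w : G → ℝ)

lemma repSet_bddBelow (hw : ∀ s ∈ S, 0 < w s) (x y : G) :
    BddBelow {c : ℝ | ∃ l : List G, (∀ s ∈ l, s ∈ S) ∧ l.prod = y⁻¹ * x ∧ c = (l.map w).sum} := by
  refine ⟨0, fun c hc => ?_⟩
  obtain ⟨l, hl, -, rfl⟩ := hc
  exact List.sum_nonneg (by
    intro a ha
    obtain ⟨s, hs, rfl⟩ := List.mem_map.1 ha
    exact (hw s (hl s hs)).le)

lemma dW_le (hw : ∀ s ∈ S, 0 < w s) {x y : G} {l : List G}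
    (hl : ∀ s ∈ l, s ∈ S) (hprod : l.prod = y⁻¹ * x) : dW S w x y ≤ (l.map w).sum :=
  csInf_le (repSet_bddBelow S w hw x y) ⟨l, hl, hprod, rfl⟩

end

-- finiteness of balls
lemma ballW_finite {m : ℕ} (w : FreeGroup (Fin m) → ℝ) {δ : ℝ} (hδ : 0 < δ)
    (hwδ : ∀ s ∈ stdGens m, δ ≤ w s) (R : ℝ) : (ballW (stdGens m) w R).Finite := by
  classical
  set N : ℕ := ⌈(R + 1) / δ⌉₊ with hN
  have hSfin : (stdGens m).Finite := stdGens_finite m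
  haveI : Finite ↥(stdGens m) := hSfin.to_subtype
  have hTfin : ((fun l : List ↥(stdGens m) => (l.map Subtype.val).prod) ''
      {l | l.length ≤ N}).Finite :=
    ((List.finite_length_le _ N).image _)
  refine hTfin.subset ?_
  intro x hx
  -- x ∈ ballW: dW x 1 ≤ R
  have hx' : dW (stdGens m) w x 1 ≤ R := hx
  -- the rep set is nonempty
  set A := {c : ℝ | ∃ l : List (FreeGroup (Fin m)), (∀ s ∈ l, s ∈ stdGens m) ∧
      l.prod = (1 : FreeGroup (Fin m))⁻¹ * x ∧ c = (l.map w).sum} with hA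
  have hAne : A.Nonempty := by
    refine ⟨((x.toWord.map (fun p => cond p.2 (FreeGroup.of p.1) (FreeGroup.of p.1)⁻¹))).map w |>.sum,
      x.toWord.map (fun p => cond p.2 (FreeGroup.of p.1) (FreeGroup.of p.1)⁻¹), ?_, ?_, rfl⟩
    · intro s hs
      obtain ⟨p, hp, rfl⟩ := List.mem_map.1 hs
      rcases p with ⟨a, b⟩
      cases b
      · exact ⟨a, Or.inr rfl⟩
      · exact ⟨a, Or.inl rfl⟩
    · rw [inv_one, one_mul, ← mk_eq_prod, FreeGroup.mk_toWord]
  have hbdd := repSet_bddBelow (stdGens m) w (fun s hs => lt_of_lt_of_le hδ (hwδ s hs)) x 1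
  obtain ⟨c, hcA, hclt⟩ := Real.lt_sInf_add_pos hAne (by norm_num : (0:ℝ) < 1)
  obtain ⟨l, hl, hprod, rfl⟩ := hcA
  have hsum : (l.map w).sum < R + 1 := lt_of_lt_of_le hclt (by
    have : sInf A = dW (stdGens m) w x 1 := rfl
    linarith [hx'])
  -- length bound
  have hlen : (l.length : ℝ) * δ ≤ (l.map w).sum := by
    have := List.card_nsmul_le_sum (l := l.map w) (n := δ) (by
      intro c hc
      obtain ⟨s, hs, rfl⟩ := List.mem_map.1 hc
      exact hwδ s (hl s hs))
    simpa [nsmul_eq_mul] using this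
  have hlenN : (l.length : ℝ) ≤ (N : ℝ) := by
    have h1 : (l.length : ℝ) ≤ (R + 1) / δ := by
      rw [le_div_iff₀ hδ]
      linarith
    have h2 : ((R+1)/δ) ≤ (N : ℝ) := Nat.le_ceil _
    exact h1.trans h2
  -- now exhibit x as image of a short list of subtype elements
  refine ⟨l.pmap (fun a ha => (⟨a, ha⟩ : ↥(stdGens m))) hl, ?_, ?_⟩
  · simpa using (by exact_mod_cast hlenN : l.length ≤ N)
  · simp only [List.map_pmap]
    rw [show (l.pmap (fun a ha => ((⟨a, ha⟩ : ↥(stdGens m)) : FreeGroup (Fin m))) hl) = l from by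
      rw [List.pmap_eq_map]; exact List.map_id l]
    rw [hprod, inv_one, one_mul]

theorem stmt6 (m : ℕ) (hm : 2 ≤ m) (w : FreeGroup (Fin m) → ℝ)
    (hwpos : ∀ s ∈ stdGens m, 0 < w s)
    (hwsym : ∀ i : Fin m, w (FreeGroup.of i)⁻¹ = w (FreeGroup.of i))
    (hnorm : ∑ i : Fin m, 2 * w (FreeGroup.of i) = 1)
    (h : ℝ)
    (hent : Filter.Tendsto
      (fun R : ℝ => Real.log (((ballW (stdGens m) w R).ncard : ℝ)) / R)
      Filter.atTop (nhds h)) :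
    (2 * m - 1 : ℝ) ≤ Real.exp h := by
  classical
  haveI : NeZero m := ⟨by omega⟩
  -- each generator has weight ≤ 1/2
  have hhalf : ∀ i : Fin m, w (FreeGroup.of i) ≤ 1 / 2 := by
    intro i
    have h1 : 2 * w (FreeGroup.of i) ≤ ∑ j : Fin m, 2 * w (FreeGroup.of j) :=
      Finset.single_le_sum (f := fun j => 2 * w (FreeGroup.of j))
        (fun j _ => by linarith [hwpos (FreeGroup.of j) ⟨j, Or.inl rfl⟩])
        (Finset.mem_univ i)
    rw [hnorm] at h1; linarith
  -- lower bound on weights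
  obtain ⟨δ, hδpos, hδle⟩ : ∃ δ : ℝ, 0 < δ ∧ ∀ s ∈ stdGens m, δ ≤ w s := by
    refine ⟨(Finset.univ.image (fun i : Fin m => w (FreeGroup.of i))).min'
      (by simp [Finset.univ_nonempty]), ?_, ?_⟩
    · obtain ⟨i, -, hi⟩ := Finset.mem_image.1
        ((Finset.univ.image (fun i : Fin m => w (FreeGroup.of i))).min'_mem
          (by simp [Finset.univ_nonempty]))
      rw [← hi]; exact hwpos _ ⟨i, Or.inl rfl⟩
    · rintro s ⟨i, hi | hi⟩ <;> subst hi
      · exact Finset.min'_le _ _ (Finset.mem_image.2 ⟨i, Finset.mem_univ i, rfl⟩)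
      · rw [hwsym]
        exact Finset.min'_le _ _ (Finset.mem_image.2 ⟨i, Finset.mem_univ i, rfl⟩)
  have hfin : ∀ R : ℝ, (ballW (stdGens m) w R).Finite := ballW_finite w hδpos hδle
  -- counting lower bound: m^n ≤ ncard (ballW R) when n/2 ≤ R
  have hcount : ∀ (n : ℕ) (R : ℝ), (n : ℝ) / 2 ≤ R →
      (m : ℝ) ^ n ≤ ((ballW (stdGens m) w R).ncard : ℝ) := by
    intro n R hnR
    set U : Set (FreeGroup (Fin m)) :=
      (fun v : Fin n → Fin m => (((List.ofFn v).map FreeGroup.of)).prod) '' Set.univ with hU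
    have hUsub : U ⊆ ballW (stdGens m) w R := by
      rintro x ⟨v, -, rfl⟩
      show dW (stdGens m) w _ 1 ≤ R
      refine le_trans (dW_le (stdGens m) w hwpos (l := (List.ofFn v).map FreeGroup.of) ?_ ?_) ?_
      · intro s hs
        obtain ⟨i, -, rfl⟩ := List.mem_map.1 hs
        exact ⟨i, Or.inl rfl⟩
      · rw [inv_one, one_mul]
      · calc ((List.map FreeGroup.of (List.ofFn v)).map w).sum
            ≤ ((List.map FreeGroup.of (List.ofFn v)).map w).length • (1/2 : ℝ) := by
              apply List.sum_le_card_nsmul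
              intro c hc
              obtain ⟨s, hs, rfl⟩ := List.mem_map.1 hc
              obtain ⟨i, -, rfl⟩ := List.mem_map.1 hs
              exact hhalf i
          _ ≤ R := by
              simp only [List.length_map, List.length_ofFn, nsmul_eq_mul]
              rw [mul_one_div]; exact hnR
    have hUcard : U.ncard = m ^ n := by
      rw [hU, Set.ncard_image_of_injective _
        (fun v1 v2 hv => List.ofFn_injective (prodOf_injective hv))]
      simp [Set.ncard_univ, Nat.card_eq_fintype_card]
    have := Set.ncard_le_ncard hUsub (hfin R)
    rw [hUcard] at this
    exact_mod_cast this
  -- the comparison function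
  have hmpos : (0:ℝ) < m := by positivity
  have hlogm : 0 ≤ Real.log m := Real.log_nonneg (by exact_mod_cast Nat.one_le_of_lt hm)
  have hglim : Filter.Tendsto (fun R : ℝ => 2 * Real.log m - Real.log m / R)
      Filter.atTop (nhds (2 * Real.log m)) := by
    have := (tendsto_const_nhds (x := Real.log m) (f := Filter.atTop (α := ℝ))).div_atTop
      Filter.tendsto_id
    simpa using (tendsto_const_nhds (x := 2 * Real.log m)).sub this
  have hle : ∀ᶠ R : ℝ in Filter.atTop,
      2 * Real.log m - Real.log m / R ≤
        Real.log (((ballW (stdGens m) w R).ncard : ℝ)) / R := by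
    filter_upwards [Filter.eventually_ge_atTop (1 : ℝ)] with R hR
    have hRpos : (0:ℝ) < R := by linarith
    set n : ℕ := ⌊2 * R⌋₊ with hn
    have hn1 : (n : ℝ) ≤ 2 * R := Nat.floor_le (by linarith)
    have hn2 : 2 * R - 1 ≤ (n : ℝ) := by
      have := Nat.lt_floor_add_one (2 * R); linarith
    have hball := hcount n R (by linarith)
    have hlog : (n : ℝ) * Real.log m ≤ Real.log ((ballW (stdGens m) w R).ncard : ℝ) := by
      calc (n : ℝ) * Real.log m = Real.log ((m : ℝ) ^ n) := by rw [Real.log_pow]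
        _ ≤ _ := Real.log_le_log (by positivity) hball
    rw [sub_div' hRpos.ne', div_le_div_iff_of_pos_right hRpos]
    calc 2 * Real.log (m:ℝ) * R - Real.log (m:ℝ) = (2 * R - 1) * Real.log m := by ring
      _ ≤ (n : ℝ) * Real.log m := by nlinarith
      _ ≤ _ := hlog
  have hfinal : 2 * Real.log m ≤ h := le_of_tendsto_of_tendsto hglim hent hle
  have : ((m : ℝ))^2 ≤ Real.exp h := by
    calc ((m:ℝ))^2 = Real.exp (2 * Real.log m) := by
          rw [two_mul, Real.exp_add, Real.exp_log hmpos]; ring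
      _ ≤ Real.exp h := Real.exp_le_exp.2 hfinal
  nlinarith [this, (by exact_mod_cast hm : (2:ℝ) ≤ (m:ℝ)), sq_nonneg ((m:ℝ) - 1)]
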